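/- arXiv:2602.15385 — 6 statements merged into one kernel-verified Lean document; each statement's English description precedes it below -/
import Mathlib

section
/- Let $I > J \geq 1$ and let $C_{i,j} > 0$ for $1 \le i \le I$, $0 \le j \le J$, $i+j \le I$ be real numbers (the observed upper claims triangle). Define the chain-ladder factor estimates $\widehat{f}_j = \left(\sum_{i=1}^{I-j-1} C_{i,j+1}\right) / \left(\sum_{i=1}^{I-j-1} C_{i,j}\right)$ for $0 \le j \le J-1$. Define recursively: $\widehat{C}^*_{i,J} = C_{i,J}$ for $i \le I-J$; $\widehat{F}_{J-1} = \left(\sum_{i=1}^{I-J} \widehat{C}^*_{i,J}\right)/\left(\sum_{i=1}^{I-J} C_{i,J-1}\right)$ and $\widehat{C}^*_{I-J+1,J} = C_{I-J+1,J-1}\widehat{F}_{J-1}$; and for $j$ decreasing from $J-2$ to $0$, $\widehat{F}_j = \left(\sum_{i=1}^{I-j-1} \widehat{C}^*_{i,J}\right)/\left(\sum_{i=1}^{I-j-1} C_{i,j}\right)$ and $\widehat{C}^*_{I-j,J} = C_{I-j,j}\widehat{F}_j$. Then for every $0 \le j \le J-1$, $\widehat{F}_j = \prod_{l=j}^{J-1}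 \widehat{f}_l$. -/
open Finset

/-- Grossing-up recursion reproduces the products of chain-ladder factors:
the projection-to-ultimate factor estimates `F j` equal `∏_{l=j}^{J-1} f̂ l`. -/
theorem stmt_0 (I J : ℕ) (hJ : 1 ≤ J) (hIJ : J < I)
    (C : ℕ → ℕ → ℝ)
    (hpos : ∀ i j, 1 ≤ i → i + j ≤ I → j ≤ J → 0 < C i j)
    (fhat F : ℕ → ℝ) (Cstar : ℕ → ℝ)
    (hfhat : ∀ j, j ≤ J - 1 →
      fhat j = (∑ i ∈ Icc 1 (I - j - 1), C i (j + 1)) / (∑ i ∈ Icc 1 (I - j - 1), C i j))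
    (hinit : ∀ i, 1 ≤ i → i ≤ I - J → Cstar i = C i J)
    (hF : ∀ j, j ≤ J - 1 →
      F j = (∑ i ∈ Icc 1 (I - j - 1), Cstar i) / (∑ i ∈ Icc 1 (I - j - 1), C i j))
    (hCstar : ∀ j, j ≤ J - 1 → Cstar (I - j) = C (I - j) j * F j) :
    ∀ j, j ≤ J - 1 → F j = ∏ l ∈ Ico j J, fhat l := by
  have hDpos : ∀ j, j ≤ J - 1 → 0 < ∑ i ∈ Icc 1 (I - j - 1), C i j := by
    intro j hj
    apply Finset.sum_pos
    · intro i hi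
      rw [mem_Icc] at hi
      exact hpos i j hi.1 (by omega) (by omega)
    · exact ⟨1, mem_Icc.mpr ⟨le_refl 1, by omega⟩⟩
  have key : ∀ d j, j + d = J - 1 → F j = ∏ l ∈ Ico j J, fhat l := by
    intro d
    induction d with
    | zero =>
      intro j hj
      have hjJ : j = J - 1 := by omega
      subst hjJ
      have hIco : Ico (J - 1) J = {J - 1} := by
        have : J = (J - 1) + 1 := by omega
        rw [this]; simp
      rw [hIco, Finset.prod_singleton, hF (J - 1) le_rfl, hfhat (J - 1) le_rfl]
      congr 1
      apply Finset.sum_congr rfl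
      intro i hi
      rw [mem_Icc] at hi
      rw [hinit i hi.1 (by omega)]
      congr 1
      omega
    | succ d ih =>
      intro j hj
      have hj1 : (j + 1) + d = J - 1 := by omega
      have hjle : j ≤ J - 1 := by omega
      have hj1le : j + 1 ≤ J - 1 := by omega
      have ihF := ih (j + 1) hj1
      -- key sum identity
      have e1 : I - j - 1 = (I - j - 2) + 1 := by omega
      have e2 : I - (j + 1) - 1 = I - j - 2 := by omega
      have e3 : I - (j + 1) = I - j - 1 := by omega
      have hS : ∑ i ∈ Icc 1 (I - j - 1), Cstar i
          = F (j + 1) * ∑ i ∈ Icc 1 (I - j - 1), C i (j + 1) := by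
        rw [e1, Finset.sum_Icc_succ_top (by omega : 1 ≤ I - j - 2 + 1),
            Finset.sum_Icc_succ_top (by omega : 1 ≤ I - j - 2 + 1)]
        have hD1 := hDpos (j + 1) hj1le
        rw [e2] at hD1
        have hFval := hF (j + 1) hj1le
        rw [e2] at hFval
        have hSum : ∑ i ∈ Icc 1 (I - j - 2), Cstar i
            = F (j + 1) * ∑ i ∈ Icc 1 (I - j - 2), C i (j + 1) := by
          rw [hFval, div_mul_cancel₀]
          exact ne_of_gt hD1
        have hCs := hCstar (j + 1) hj1le
        rw [e3] at hCs
        have e4 : I - j - 2 + 1 = I - j - 1 := by omega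
        rw [e4, hSum, hCs]
        ring
      have hfj := hfhat j hjle
      have hFj := hF j hjle
      have hD := hDpos j hjle
      rw [Finset.prod_eq_prod_Ico_succ_bot (by omega : j < J), ← ihF, hFj, hS, hfj]
      field_simp
  intro j hj
  exact key (J - 1 - j) j (by omega)
end

section
/- Under the same setup as the grossing-up recursion (positive upper triangle $C_{i,j}$ for $i+j \le I$, chain-ladder factors $\widehat{f}_j$, recursively defined projection-to-ultimate factors $\widehat{F}_j$ and one-shot predictors $\widehat{C}^*_{i,J} = C_{i,I-i}\widehat{F}_{I-i}$ for $i > I-J$), the grossing-up predictors equal the classical chain-ladder predictors: for every accident period $i \in \{I-J+1,\ldots,I\}$, $\widehat{C}^*_{i,J} = C_{i,I-i} \prod_{l=I-i}^{J-1} \widehat{f}_l$. -/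
open Finset

/-- The grossing-up one-shot predictors equal the classical chain-ladder predictors:
for every accident period `i ∈ {I-J+1, …, I}`,
`Ĉ*_{i,J} = C_{i,I-i} ∏_{l=I-i}^{J-1} f̂_l`. -/
theorem stmt_1 (I J : ℕ) (hJ : 1 ≤ J) (hIJ : J < I)
    (C : ℕ → ℕ → ℝ)
    (hpos : ∀ i j, 1 ≤ i → i + j ≤ I → j ≤ J → 0 < C i j)
    (fhat F : ℕ → ℝ) (Cstar : ℕ → ℝ)
    (hfhat : ∀ j, j ≤ J - 1 →
      fhat j = (∑ i ∈ Icc 1 (I - j - 1), C i (j + 1)) / (∑ i ∈ Icc 1 (I - j - 1), C i j))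
    (hinit : ∀ i, 1 ≤ i → i ≤ I - J → Cstar i = C i J)
    (hF : ∀ j, j ≤ J - 1 →
      F j = (∑ i ∈ Icc 1 (I - j - 1), Cstar i) / (∑ i ∈ Icc 1 (I - j - 1), C i j))
    (hCstar : ∀ j, j ≤ J - 1 → Cstar (I - j) = C (I - j) j * F j) :
    ∀ i, I - J + 1 ≤ i → i ≤ I → Cstar i = C i (I - i) * ∏ l ∈ Ico (I - i) J, fhat l := by
  have hS : ∀ j, j ≤ J - 1 → 0 < ∑ i ∈ Icc 1 (I - j - 1), C i j := by
    intro j hj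
    apply Finset.sum_pos
    · intro i hi
      simp only [mem_Icc] at hi
      exact hpos i j hi.1 (by omega) (by omega)
    · refine ⟨1, ?_⟩
      simp only [mem_Icc]
      omega
  have key : ∀ k j, j + k = J - 1 →
      (F j = ∏ l ∈ Ico j J, fhat l ∧
        (∑ i ∈ Icc 1 (I - j - 1), Cstar i)
          = (∑ i ∈ Icc 1 (I - j - 1), C i j) * ∏ l ∈ Ico j J, fhat l) := by
    intro k
    induction k with
    | zero =>
      intro j hjk
      have hj : j = J - 1 := by omega
      subst hj
      have hj1 : J - 1 + 1 = J := by omega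
      have hT : (∑ i ∈ Icc 1 (I - (J-1) - 1), Cstar i)
          = ∑ i ∈ Icc 1 (I - (J-1) - 1), C i J := by
        apply Finset.sum_congr rfl
        intro i hi
        simp only [mem_Icc] at hi
        exact hinit i hi.1 (by omega)
      have hprod : (∏ l ∈ Ico (J-1) J, fhat l) = fhat (J-1) := by
        have : Ico (J-1) J = {J-1} := by
          ext x; simp only [mem_Ico, mem_singleton]; omega
        rw [this, prod_singleton]
      have hfe := hfhat (J-1) le_rfl
      rw [hj1] at hfe
      constructor
      · rw [hF (J-1) le_rfl, hT, hprod, hfe]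
      · rw [hT, hprod, hfe, mul_div_cancel₀ _ (ne_of_gt (hS (J-1) le_rfl))]
    | succ k ih =>
      intro j hjk
      have hj : j ≤ J - 1 := by omega
      obtain ⟨ihF, ihT⟩ := ih (j+1) (by omega)
      have hn : I - j - 1 = (I - (j+1) - 1) + 1 := by omega
      have hm : I - (j+1) - 1 + 1 = I - (j+1) := by omega
      have hsplitC : (∑ i ∈ Icc 1 (I - j - 1), C i (j+1))
          = (∑ i ∈ Icc 1 (I - (j+1) - 1), C i (j+1)) + C (I - (j+1)) (j+1) := by
        rw [hn, Finset.sum_Icc_succ_top (by omega), hm]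
      have hsplitT : (∑ i ∈ Icc 1 (I - j - 1), Cstar i)
          = (∑ i ∈ Icc 1 (I - (j+1) - 1), Cstar i) + Cstar (I - (j+1)) := by
        rw [hn, Finset.sum_Icc_succ_top (by omega), hm]
      have hprod : (∏ l ∈ Ico j J, fhat l) = fhat j * ∏ l ∈ Ico (j+1) J, fhat l :=
        Finset.prod_eq_prod_Ico_succ_bot (by omega) _
      have hT : (∑ i ∈ Icc 1 (I - j - 1), Cstar i)
          = (∑ i ∈ Icc 1 (I - j - 1), C i (j+1)) * ∏ l ∈ Ico (j+1) J, fhat l := by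
        rw [hsplitT, ihT, hCstar (j+1) (by omega), ihF, hsplitC]
        ring
      have hSne : (∑ i ∈ Icc 1 (I - j - 1), C i j) ≠ 0 := ne_of_gt (hS j hj)
      have hT' : (∑ i ∈ Icc 1 (I - j - 1), Cstar i)
          = (∑ i ∈ Icc 1 (I - j - 1), C i j) * ∏ l ∈ Ico j J, fhat l := by
        rw [hT, hprod, hfhat j hj]
        field_simp
      refine ⟨?_, hT'⟩
      rw [hF j hj, hT', mul_comm, mul_div_assoc, div_self hSne, mul_one]
  intro i hi1 hi2
  have hji : I - (I - i) = i := by omega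
  have hj : I - i ≤ J - 1 := by omega
  obtain ⟨hFj, -⟩ := key (J - 1 - (I - i)) (I - i) (by omega)
  have h := hCstar (I - i) hj
  rw [hji] at h
  rw [h, hFj]
end

section
/- In the chain-ladder model, the conditional expectation of the ultimate claim given the observed history satisfies the product formula: for an accident period $i$ with $I-i < J$, $\mathbb{E}[C_{i,J} \mid C_{i,0},\ldots,C_{i,I-i}] = C_{i,I-i}\prod_{l=I-i}^{J-1} f_l$ almost surely. -/
open MeasureTheory Finset

/-- The sigma-algebra generated by the observations `C 0, …, C j`. -/
def hist {Ω : Type*} (C : ℕ → Ω → ℝ) (j : ℕ) : MeasurableSpace Ω :=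
  ⨆ k ∈ Set.Iic j, MeasurableSpace.comap (C k) inferInstance

lemma hist_le_m0 {Ω : Type*} {m0 : MeasurableSpace Ω} (C : ℕ → Ω → ℝ)
    (hmeas : ∀ j, Measurable (C j)) (j : ℕ) : hist C j ≤ m0 := by
  refine iSup₂_le fun k _ => ?_
  exact (hmeas k).comap_le

lemma hist_mono {Ω : Type*} (C : ℕ → Ω → ℝ) {j k : ℕ} (h : j ≤ k) :
    hist C j ≤ hist C k := by
  refine iSup₂_le fun l hl => ?_
  exact le_iSup₂ (f := fun l (_ : l ∈ Set.Iic k) => MeasurableSpace.comap (C l) inferInstance)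
    l (le_trans hl h)

lemma key {Ω : Type*} {m0 : MeasurableSpace Ω} (μ : Measure Ω) [IsProbabilityMeasure μ]
    (J : ℕ) (C : ℕ → Ω → ℝ) (f : ℕ → ℝ)
    (hmeas : ∀ j, Measurable (C j))
    (hint : ∀ j, Integrable (C j) μ)
    (hCL : ∀ j, j < J → μ[C (j + 1) | hist C j] =ᵐ[μ] fun ω => f j * C j ω)
    (k : ℕ) :
    ∀ n, k ≤ n → n ≤ J →
      μ[C n | hist C k] =ᵐ[μ] fun ω => C k ω * ∏ l ∈ Ico k n, f l := by
  intro n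
  induction n with
  | zero =>
      intro hk _
      interval_cases k
      simp only [Ico_self, prod_empty, mul_one]
      have hm : StronglyMeasurable[hist C 0] (C 0) := by
        refine Measurable.stronglyMeasurable ?_
        rw [measurable_iff_comap_le]
        exact le_iSup₂ (f := fun l (_ : l ∈ Set.Iic 0) =>
          MeasurableSpace.comap (C l) inferInstance) 0 (Set.mem_Iic.mpr le_rfl)
      rw [condExp_of_stronglyMeasurable (hist_le_m0 C hmeas 0) hm (hint 0)]
  | succ n ih =>
      intro hk hn
      rcases Nat.lt_or_ge k (n + 1) with hlt | hge
      · have hkn : k ≤ n := Nat.lt_succ_iff.mp hlt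
        have hnJ : n < J := hn
        have tower : μ[C (n+1) | hist C k] =ᵐ[μ] μ[μ[C (n+1) | hist C n] | hist C k] :=
          (condExp_condExp_of_le (hist_mono C hkn) (hist_le_m0 C hmeas n)).symm
        have h1 : μ[μ[C (n+1) | hist C n] | hist C k]
            =ᵐ[μ] μ[(fun ω => f n * C n ω) | hist C k] :=
          condExp_congr_ae (hCL n hnJ)
        have h2 : μ[(fun ω => f n * C n ω) | hist C k]
            =ᵐ[μ] fun ω => f n * (μ[C n | hist C k]) ω := by
          have := condExp_smul (μ := μ) (m := hist C k) (c := f n) (f := C n)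
          exact this
        have h3 := ih hkn (le_of_lt hnJ)
        calc μ[C (n+1) | hist C k]
            =ᵐ[μ] μ[μ[C (n+1) | hist C n] | hist C k] := tower
          _ =ᵐ[μ] μ[(fun ω => f n * C n ω) | hist C k] := h1
          _ =ᵐ[μ] fun ω => f n * (μ[C n | hist C k]) ω := h2
          _ =ᵐ[μ] fun ω => C k ω * ∏ l ∈ Ico k (n+1), f l := by
              filter_upwards [h3] with ω hω
              rw [hω, prod_Ico_succ_top hkn]
              ring
      · have hk1 : k = n + 1 := le_antisymm hk hge
        subst hk1
        simp only [Ico_self, prod_empty, mul_one]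
        have hm : StronglyMeasurable[hist C (n+1)] (C (n+1)) := by
          refine Measurable.stronglyMeasurable ?_
          rw [measurable_iff_comap_le]
          exact le_iSup₂ (f := fun l (_ : l ∈ Set.Iic (n+1)) =>
            MeasurableSpace.comap (C l) inferInstance) (n+1) (Set.mem_Iic.mpr le_rfl)
        rw [condExp_of_stronglyMeasurable (hist_le_m0 C hmeas (n+1)) hm (hint (n+1))]

/-- Chain-ladder product formula for the conditionally expected ultimate claim:
`E[C_J | C_0, …, C_{I-i}] = C_{I-i} ∏_{l=I-i}^{J-1} f_l` a.s. -/
theorem stmt_4 {Ω : Type*} {m0 : MeasurableSpace Ω} (μ : Measure Ω) [IsProbabilityMeasure μ]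
    (I J i : ℕ) (hJ : 1 ≤ J) (hi : I - i < J)
    (C : ℕ → Ω → ℝ) (f : ℕ → ℝ)
    (hmeas : ∀ j, Measurable (C j))
    (hint : ∀ j, Integrable (C j) μ)
    (hpos : ∀ j, ∀ᵐ ω ∂μ, 0 < C j ω)
    (hf : ∀ j, j < J → 0 < f j)
    (hCL : ∀ j, j < J → μ[C (j + 1) | hist C j] =ᵐ[μ] fun ω => f j * C j ω) :
    μ[C J | hist C (I - i)] =ᵐ[μ] fun ω => C (I - i) ω * ∏ l ∈ Ico (I - i) J, f l := by
  exact key μ J C f hmeas hint hCL (I - i) J (le_of_lt hi) le_rfl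
end

section
/- Uncorrelatedness of successive chain-ladder estimators: under Mack's model assumptions, for $j < k$, $\mathbb{E}[\widehat{f}_j\,\widehat{f}_k] = f_j f_k$, where $\widehat{f}_j$ are the standard chain-ladder factor estimators. Consequently, $\mathbb{E}\left[\prod_{l=j}^{J-1}\widehat{f}_l\right] = \prod_{l=j}^{J-1} f_l$, i.e., the estimated projection-to-ultimate factor is an unbiased estimator of the true projection-to-ultimate factor $F_j$. -/
open MeasureTheory Finset

private def sigP {Ω : Type*} (C : ℕ → ℕ → Ω → ℝ) (i : ℕ) : MeasurableSpace Ω :=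
  MeasurableSpace.comap (fun ω j => C i j ω) MeasurableSpace.pi

private def sigB {Ω : Type*} (C : ℕ → ℕ → Ω → ℝ) (k : ℕ) : MeasurableSpace Ω :=
  ⨆ i, hist (C i) k

private def sigM {Ω : Type*} (C : ℕ → ℕ → Ω → ℝ) (i k : ℕ) : MeasurableSpace Ω :=
  ⨆ i' ∈ ({i}ᶜ : Set ℕ), hist (C i') k

/-- Uncorrelatedness of successive chain-ladder estimators: `E[f̂_j f̂_k] = f_j f_k` for
`j < k`, and consequently `E[∏_{l=j}^{J-1} f̂_l] = ∏_{l=j}^{J-1} f_l`. -/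
theorem stmt_7 {Ω : Type*} {m0 : MeasurableSpace Ω} (μ : Measure Ω) [IsProbabilityMeasure μ]
    (I J : ℕ) (hJ : 1 ≤ J) (hIJ : J < I)
    (C : ℕ → ℕ → Ω → ℝ) (f : ℕ → ℝ)
    (hmeas : ∀ i j, Measurable (C i j))
    (hint : ∀ i j, Integrable (C i j) μ)
    (hpos : ∀ i j, ∀ᵐ ω ∂μ, 0 < C i j ω)
    (hf : ∀ j, j < J → 0 < f j)
    (hindep : ProbabilityTheory.iIndepFun (m := fun _ => MeasurableSpace.pi)
      (fun i ω j => C i j ω) μ)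
    (hCL : ∀ i j, j < J → μ[C i (j + 1) | hist (C i) j] =ᵐ[μ] fun ω => f j * C i j ω)
    (fhat : ℕ → Ω → ℝ)
    (hfhat : ∀ j, fhat j = fun ω =>
      (∑ i ∈ Icc 1 (I - j - 1), C i (j + 1) ω) / (∑ i ∈ Icc 1 (I - j - 1), C i j ω))
    (hIntPair : ∀ j k, j < k → k < J → Integrable (fun ω => fhat j ω * fhat k ω) μ)
    (hIntProd : ∀ j k, j ≤ k → k ≤ J → Integrable (fun ω => ∏ l ∈ Ico j k, fhat l ω) μ) :
    (∀ j k, j < k → k < J → ∫ ω, fhat j ω * fhat k ω ∂μ = f j * f k)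
    ∧ ∀ j, j < J → ∫ ω, ∏ l ∈ Ico j J, fhat l ω ∂μ = ∏ l ∈ Ico j J, f l := by
  classical
  let P : ℕ → MeasurableSpace Ω := sigP C
  let B : ℕ → MeasurableSpace Ω := sigB C
  have hPdef : ∀ i, P i = MeasurableSpace.comap (fun ω j => C i j ω) MeasurableSpace.pi :=
    fun i => rfl
  have hBdef : ∀ k, B k = ⨆ i, hist (C i) k := fun k => rfl
  have hPmeas : ∀ i, Measurable fun ω j => C i j ω :=
    fun i => measurable_pi_lambda _ fun j => hmeas i j
  have hPle : ∀ i, P i ≤ m0 := fun i => (hPmeas i).comap_le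
  have hcomap_le : ∀ i l, MeasurableSpace.comap (C i l) inferInstance ≤ P i := by
    intro i l
    have hc : C i l = (fun g : ℕ → ℝ => g l) ∘ fun ω j => C i j ω := rfl
    rw [hPdef, hc, ← MeasurableSpace.comap_comp]
    exact MeasurableSpace.comap_mono (measurable_pi_apply l).comap_le
  have histleP : ∀ i k, hist (C i) k ≤ P i := fun i k =>
    iSup₂_le fun l _ => hcomap_le i l
  have histle : ∀ i k, hist (C i) k ≤ m0 := fun i k => (histleP i k).trans (hPle i)
  have hB : ∀ k, B k ≤ m0 := fun k => iSup_le fun i => histle i k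
  have hCmeasHist : ∀ i l k, l ≤ k → Measurable[hist (C i) k] (C i l) := by
    intro i l k hlk
    rw [measurable_iff_comap_le, hist]
    exact le_biSup (fun l => MeasurableSpace.comap (C i l) inferInstance) (Set.mem_Iic.2 hlk)
  have hCmeasB : ∀ i l k, l ≤ k → Measurable[B k] (C i l) := by
    intro i l k hlk
    rw [measurable_iff_comap_le]
    refine le_trans ((measurable_iff_comap_le).1 (hCmeasHist i l k hlk)) ?_
    rw [hBdef]
    exact le_iSup (fun i => hist (C i) k) i
  have hfhatB : ∀ l k, l < k → Measurable[B k] (fhat l) := by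
    intro l k hlk
    rw [hfhat]
    exact Measurable.div
      (Finset.measurable_sum _ fun i _ => hCmeasB i (l + 1) k hlk)
      (Finset.measurable_sum _ fun i _ => hCmeasB i l k hlk.le)
  have hPindep : ProbabilityTheory.iIndep P μ := hindep.iIndep
  have hIndep : ∀ i : ℕ,
      ProbabilityTheory.Indep (P i) (⨆ i' ∈ ({i}ᶜ : Set ℕ), P i') μ := by
    intro i
    have h := ProbabilityTheory.indep_biSup_compl hPle hPindep {i}
    have h2 : (⨆ n ∈ ({i} : Set ℕ), P n) = P i := by simp
    rwa [h2] at h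
  -- key conditional expectation property w.r.t. the joint sigma-algebra
  have hcond : ∀ i k, k < J →
      (fun ω => f k * C i k ω) =ᵐ[μ] μ[C i (k + 1)|B k] := by
    intro i k hk
    have hm₂def : sigM C i k = ⨆ i' ∈ ({i}ᶜ : Set ℕ), hist (C i') k := rfl
    have hm₂le : sigM C i k ≤ m0 := iSup₂_le fun i' _ => histle i' k
    have hm₂P : sigM C i k ≤ ⨆ i' ∈ ({i}ᶜ : Set ℕ), P i' := iSup₂_mono fun i' _ => histleP i' k
    have hglob : ∫ ω, C i (k + 1) ω ∂μ = ∫ ω, f k * C i k ω ∂μ := by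
      rw [← integral_condExp (histle i k) (f := C i (k + 1))]
      exact integral_congr_ae (hCL i k hk)
    have hsetA₁ : ∀ A₁ : Set Ω, MeasurableSet[hist (C i) k] A₁ →
        ∫ ω in A₁, C i (k + 1) ω ∂μ = ∫ ω in A₁, f k * C i k ω ∂μ := by
      intro A₁ hA₁
      rw [← setIntegral_condExp (histle i k) (hint i (k + 1)) hA₁]
      exact setIntegral_congr_ae (histle i k A₁ hA₁)
        ((hCL i k hk).mono fun ω hω _ => hω)
    set PS : Set (Set Ω) := {t | ∃ A₁ A₂, MeasurableSet[hist (C i) k] A₁ ∧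
      MeasurableSet[sigM C i k] A₂ ∧ t = A₁ ∩ A₂} with hPSdef
    have hPS_pi : IsPiSystem PS := by
      rintro _ ⟨A₁, A₂, h₁, h₂, rfl⟩ _ ⟨B₁, B₂, g₁, g₂, rfl⟩ _
      refine ⟨A₁ ∩ B₁, A₂ ∩ B₂, h₁.inter g₁, h₂.inter g₂, ?_⟩
      ext ω; simp only [Set.mem_inter_iff]; tauto
    have hBk_eq : B k = MeasurableSpace.generateFrom PS := by
      apply le_antisymm
      · rw [hBdef]
        refine iSup_le fun i' => ?_
        by_cases hii : i' = i
        · subst hii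
          intro A hA
          exact MeasurableSpace.measurableSet_generateFrom
            ⟨A, Set.univ, hA, MeasurableSet.univ, (Set.inter_univ A).symm⟩
        · have hmem : i' ∈ ({i}ᶜ : Set ℕ) := by simpa using hii
          refine le_trans (le_biSup (fun i'' => hist (C i'') k) hmem) ?_
          intro A hA
          exact MeasurableSpace.measurableSet_generateFrom
            ⟨Set.univ, A, MeasurableSet.univ, hA, (Set.univ_inter A).symm⟩
      · refine MeasurableSpace.generateFrom_le ?_
        rintro _ ⟨A₁, A₂, h₁, h₂, rfl⟩
        have hh₁ : MeasurableSet[B k] A₁ := (le_iSup (fun i' => hist (C i') k) i) A₁ h₁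
        have hm₂B : sigM C i k ≤ B k := iSup₂_le fun i' _ => le_iSup (fun i'' => hist (C i'') k) i'
        exact hh₁.inter (hm₂B A₂ h₂)
    have hsplit : ∀ g : Ω → ℝ, Measurable[P i] g → Integrable g μ →
        ∀ A₁ A₂ : Set Ω, MeasurableSet[hist (C i) k] A₁ → MeasurableSet[sigM C i k] A₂ →
        ∫ ω in A₁ ∩ A₂, g ω ∂μ = (∫ ω in A₁, g ω ∂μ) * (μ A₂).toReal := by
      intro g hgmeas hgint A₁ A₂ hA₁ hA₂
      have hA₁0 : MeasurableSet A₁ := histle i k A₁ hA₁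
      have hA₂0 : MeasurableSet A₂ := hm₂le A₂ hA₂
      have hind : ProbabilityTheory.IndepFun (A₁.indicator g)
          (A₂.indicator fun _ => (1 : ℝ)) μ := by
        rw [ProbabilityTheory.IndepFun_iff_Indep]
        refine ProbabilityTheory.indep_of_indep_of_le_left
          (ProbabilityTheory.indep_of_indep_of_le_right (hIndep i)
            (Measurable.comap_le (measurable_const.indicator (hm₂P A₂ hA₂))))
          (Measurable.comap_le (hgmeas.indicator (histleP i k A₁ hA₁)))
      have e1 : ∫ ω in A₁ ∩ A₂, g ω ∂μ
          = ∫ ω, (A₁.indicator g * A₂.indicator fun _ => (1 : ℝ)) ω ∂μ := by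
        rw [← integral_indicator (hA₁0.inter hA₂0)]
        refine integral_congr_ae (Filter.Eventually.of_forall fun ω => ?_)
        by_cases h₁ : ω ∈ A₁ <;> by_cases h₂ : ω ∈ A₂ <;>
          simp [Set.indicator_apply, h₁, h₂, Set.mem_inter_iff]
      rw [e1, hind.integral_mul_eq_mul_integral (hgint.indicator hA₁0).aestronglyMeasurable
        ((integrable_const (1 : ℝ)).indicator hA₂0).aestronglyMeasurable]
      rw [integral_indicator hA₁0, integral_indicator hA₂0]
      simp [setIntegral_const, Measure.real]
    have hPimeas1 : Measurable[P i] (C i (k + 1)) := by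
      rw [measurable_iff_comap_le]; exact hcomap_le i (k + 1)
    have hPimeas2 : Measurable[P i] fun ω => f k * C i k ω := by
      refine Measurable.const_mul ?_ (f k)
      rw [measurable_iff_comap_le]; exact hcomap_le i k
    have hset : ∀ s : Set Ω, MeasurableSet[B k] s →
        ∫ ω in s, f k * C i k ω ∂μ = ∫ ω in s, C i (k + 1) ω ∂μ := by
      have hint1 : Integrable (C i (k + 1)) μ := hint i (k + 1)
      have hint2 : Integrable (fun ω => f k * C i k ω) μ := (hint i k).const_mul (f k)
      have : ∀ ⦃s : Set Ω⦄, MeasurableSet[B k] s →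
          ∫ ω in s, f k * C i k ω ∂μ = ∫ ω in s, C i (k + 1) ω ∂μ := by
        refine MeasurableSpace.induction_on_inter (m := B k) hBk_eq hPS_pi (by simp) ?_ ?_ ?_
        · rintro _ ⟨A₁, A₂, h₁, h₂, rfl⟩
          rw [hsplit _ hPimeas2 hint2 A₁ A₂ h₁ h₂,
            hsplit _ hPimeas1 hint1 A₁ A₂ h₁ h₂, hsetA₁ A₁ h₁]
        · intro t htm ht
          have ht0 : MeasurableSet t := hB k t htm
          have h1 := integral_add_compl ht0 hint1
          have h2 := integral_add_compl ht0 hint2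
          linarith [h1, h2, ht, hglob]
        · intro g hdisj hgm hgc
          have hgm0 : ∀ n, MeasurableSet (g n) := fun n => hB k _ (hgm n)
          rw [integral_iUnion hgm0 hdisj hint2.integrableOn,
              integral_iUnion hgm0 hdisj hint1.integrableOn]
          exact tsum_congr hgc
      exact fun s hs => this hs
    exact ae_eq_condExp_of_forall_setIntegral_eq (hB k) (hint i (k + 1))
      (fun s _ _ => ((hint i k).const_mul (f k)).integrableOn)
      (fun s hs _ => hset s hs)
      (Measurable.stronglyMeasurable
        ((hCmeasB i k k le_rfl).const_mul (f k))).aestronglyMeasurable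
  -- integrability of single estimators
  have hfhat_int : ∀ k, k < J → Integrable (fhat k) μ := by
    intro k hk
    have h := hIntProd k (k + 1) (Nat.le_succ k) hk
    simpa [Nat.Ico_succ_singleton] using h
  -- conditional expectation of the estimator
  have hcond_fhat : ∀ k, k < J → μ[fhat k|B k] =ᵐ[μ] fun _ => f k := by
    intro k hk
    have hone : 1 ≤ I - k - 1 := by omega
    have hsne : (Icc 1 (I - k - 1)).Nonempty := ⟨1, by simp [hone]⟩
    have hSmeas : Measurable[B k] fun ω => ∑ i ∈ Icc 1 (I - k - 1), C i k ω :=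
      Finset.measurable_sum _ fun i _ => hCmeasB i k k le_rfl
    have hSpos : ∀ᵐ ω ∂μ, 0 < ∑ i ∈ Icc 1 (I - k - 1), C i k ω := by
      have h := (Filter.eventually_all_finset (Icc 1 (I - k - 1))).2
        fun i _ => hpos i k
      filter_upwards [h] with ω hω
      exact Finset.sum_pos (fun i hi => hω i hi) hsne
    have hT_int : Integrable (∑ i ∈ Icc 1 (I - k - 1), C i (k + 1)) μ :=
      integrable_finset_sum' _ fun i _ => hint i (k + 1)
    have hfun : ((fun ω => (∑ i ∈ Icc 1 (I - k - 1), C i k ω)⁻¹)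
        * ∑ i ∈ Icc 1 (I - k - 1), C i (k + 1)) = fhat k := by
      rw [hfhat]; funext ω
      simp only [Pi.mul_apply, Finset.sum_apply]
      rw [div_eq_inv_mul]
    have hfg : Integrable ((fun ω => (∑ i ∈ Icc 1 (I - k - 1), C i k ω)⁻¹)
        * ∑ i ∈ Icc 1 (I - k - 1), C i (k + 1)) μ := by
      rw [hfun]; exact hfhat_int k hk
    have hmul := condExp_mul_of_stronglyMeasurable_left (μ := μ)
      (Measurable.stronglyMeasurable hSmeas.inv) hfg hT_int
    have hsum := condExp_finset_sum (μ := μ) (m := B k)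
      (fun i (_ : i ∈ Icc 1 (I - k - 1)) => hint i (k + 1))
    have hterm : ∀ᵐ ω ∂μ, ∀ i ∈ Icc 1 (I - k - 1),
        (μ[C i (k + 1)|B k]) ω = f k * C i k ω := by
      refine (Filter.eventually_all_finset _).2 fun i _ => ?_
      filter_upwards [(hcond i k hk).symm] with ω hω using hω
    have h2 : μ[fhat k|B k] =ᵐ[μ]
        (fun ω => (∑ i ∈ Icc 1 (I - k - 1), C i k ω)⁻¹)
          * μ[∑ i ∈ Icc 1 (I - k - 1), C i (k + 1)|B k] := by
      rw [← hfun]; exact hmul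
    filter_upwards [h2, hsum, hterm, hSpos] with ω hω₁ hω₂ hω₃ hω₄
    rw [hω₁, Pi.mul_apply, hω₂, Finset.sum_apply, Finset.sum_congr rfl hω₃,
      ← Finset.mul_sum, mul_comm (f k), ← mul_assoc,
      inv_mul_cancel₀ (ne_of_gt hω₄), one_mul]
  -- pull-out property for integrals against the estimator
  have key : ∀ k, k < J → ∀ g : Ω → ℝ, StronglyMeasurable[B k] g →
      Integrable (fun ω => g ω * fhat k ω) μ →
      ∫ ω, g ω * fhat k ω ∂μ = f k * ∫ ω, g ω ∂μ := by
    intro k hk g hg hgint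
    have hpi : (fun ω => g ω * fhat k ω) = g * fhat k := rfl
    have hfg : Integrable (g * fhat k) μ := by rw [← hpi]; exact hgint
    have h2 : μ[g * fhat k|B k] =ᵐ[μ] g * μ[fhat k|B k] :=
      condExp_mul_of_stronglyMeasurable_left hg hfg (hfhat_int k hk)
    calc ∫ ω, g ω * fhat k ω ∂μ
        = ∫ ω, (μ[g * fhat k|B k]) ω ∂μ := by
          rw [integral_condExp (hB k)]; rw [hpi]
      _ = ∫ ω, g ω * f k ∂μ := by
          refine integral_congr_ae ?_
          filter_upwards [h2, hcond_fhat k hk] with ω hω₁ hω₂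
          rw [hω₁, Pi.mul_apply, hω₂]
      _ = f k * ∫ ω, g ω ∂μ := by rw [integral_mul_const, mul_comm]
  have hunbiased : ∀ j, j < J → ∫ ω, fhat j ω ∂μ = f j := by
    intro j hj
    have h := key j hj (fun _ => 1) stronglyMeasurable_const
      (by simpa using hfhat_int j hj)
    simpa using h
  constructor
  · intro j k hjk hkJ
    have h := key k hkJ (fhat j) ((hfhatB j k hjk).stronglyMeasurable)
      (hIntPair j k hjk hkJ)
    rw [h, hunbiased j (hjk.trans hkJ), mul_comm]
  · have main : ∀ n, n ≤ J → ∀ j, j ≤ n →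
        ∫ ω, ∏ l ∈ Ico j n, fhat l ω ∂μ = ∏ l ∈ Ico j n, f l := by
      intro n
      induction n with
      | zero =>
        intro _ j hj
        obtain rfl : j = 0 := Nat.le_zero.mp hj
        simp
      | succ n ih =>
        intro hn j hj
        rcases Nat.lt_or_ge j (n + 1) with hlt | hge
        · have hj' : j ≤ n := Nat.lt_succ_iff.mp hlt
          have hn' : n < J := hn
          have hg : StronglyMeasurable[B n] fun ω => ∏ l ∈ Ico j n, fhat l ω :=
            (Finset.measurable_prod _ fun l hl =>
              hfhatB l n (Finset.mem_Ico.mp hl).2).stronglyMeasurable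
          have hgi : Integrable (fun ω => (∏ l ∈ Ico j n, fhat l ω) * fhat n ω) μ := by
            have h := hIntProd j (n + 1) (hj'.trans (Nat.le_succ n)) hn
            simpa [Finset.prod_Ico_succ_top hj'] using h
          have h := key n hn' _ hg hgi
          calc ∫ ω, ∏ l ∈ Ico j (n + 1), fhat l ω ∂μ
              = ∫ ω, (∏ l ∈ Ico j n, fhat l ω) * fhat n ω ∂μ := by
                refine integral_congr_ae (Filter.Eventually.of_forall fun ω => ?_)
                show (∏ l ∈ Ico j (n + 1), fhat l ω)
                  = (∏ l ∈ Ico j n, fhat l ω) * fhat n ω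
                rw [Finset.prod_Ico_succ_top hj']
            _ = f n * ∫ ω, ∏ l ∈ Ico j n, fhat l ω ∂μ := h
            _ = f n * ∏ l ∈ Ico j n, f l := by
                rw [ih (Nat.le_of_succ_le hn) j hj']
            _ = ∏ l ∈ Ico j (n + 1), f l := by
                rw [Finset.prod_Ico_succ_top hj', mul_comm]
        · obtain rfl : j = n + 1 := le_antisymm hj hge
          simp
    intro j hj
    exact main J le_rfl j hj.le
end

section
/- Conditional unbiasedness of the chain-ladder predictor: under Mack's model, the chain-ladder predictor $\widehat{C}_{i,J} = C_{i,I-i}\prod_{l=I-i}^{J-1}\widehat{f}_l$ for accident period $i > I-J$ satisfies $\mathbb{E}[\widehat{C}_{i,J} \mid \mathcal{B}_{I-i}] = \mathbb{E}[C_{i,J} \mid \mathcal{B}_{I-i}]$ almost surely, where $\mathcal{B}_{j}$ is the sigma-algebra generated by all observations $C_{k,l}$ with $l \le j$. -/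
open MeasureTheory Finset

/-- The sigma-algebra generated by all observations `C k l`, `l ≤ j`, `1 ≤ k ≤ I`. -/
def histAll {Ω : Type*} (I : ℕ) (C : ℕ → ℕ → Ω → ℝ) (j : ℕ) : MeasurableSpace Ω :=
  ⨆ k ∈ Set.Icc 1 I, ⨆ l ∈ Set.Iic j, MeasurableSpace.comap (C k l) inferInstance

section Aux

open ProbabilityTheory

lemma measSet_mono {Ω : Type*} {m m' : MeasurableSpace Ω} (h : m ≤ m') {s : Set Ω}
    (hs : MeasurableSet[m] s) : MeasurableSet[m'] s :=
  h s hs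

lemma measurable_indicator_one' {Ω : Type*} {m : MeasurableSpace Ω} {s : Set Ω}
    (hs : MeasurableSet[m] s) : Measurable[m] (s.indicator fun _ => (1 : ℝ)) :=
  measurable_const.indicator hs

lemma measurable_indicator_fun' {Ω : Type*} {m : MeasurableSpace Ω} {s : Set Ω} {h : Ω → ℝ}
    (hh : Measurable[m] h) (hs : MeasurableSet[m] s) : Measurable[m] (s.indicator h) :=
  hh.indicator hs

lemma sup_eq_generateFrom_inter {Ω : Type*} (m₁ m₂ : MeasurableSpace Ω) :
    m₁ ⊔ m₂ = MeasurableSpace.generateFrom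
      {s : Set Ω | ∃ A B, MeasurableSet[m₁] A ∧ MeasurableSet[m₂] B ∧ s = A ∩ B} := by
  apply le_antisymm
  · apply sup_le
    · intro s hs
      exact MeasurableSpace.measurableSet_generateFrom
        ⟨s, Set.univ, hs, @MeasurableSet.univ Ω m₂, (Set.inter_univ s).symm⟩
    · intro s hs
      exact MeasurableSpace.measurableSet_generateFrom
        ⟨Set.univ, s, @MeasurableSet.univ Ω m₁, hs, (Set.univ_inter s).symm⟩
  · apply MeasurableSpace.generateFrom_le
    rintro s ⟨A, B, hA, hB, rfl⟩
    exact (measSet_mono le_sup_left hA).inter (measSet_mono le_sup_right hB)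

lemma isPiSystem_inter_sets {Ω : Type*} (m₁ m₂ : MeasurableSpace Ω) :
    IsPiSystem {s : Set Ω | ∃ A B, MeasurableSet[m₁] A ∧ MeasurableSet[m₂] B ∧ s = A ∩ B} := by
  rintro s ⟨A, B, hA, hB, rfl⟩ t ⟨A', B', hA', hB', rfl⟩ -
  refine ⟨A ∩ A', B ∩ B', hA.inter hA', hB.inter hB', ?_⟩
  ext x
  simp only [Set.mem_inter_iff]
  tauto

/-- If `m₂` is independent of `m₁ ⊔ σ(X)`, then conditioning `X` on `m₁ ⊔ m₂` is the same as
conditioning on `m₁`. -/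
lemma condexp_sup_indep {Ω : Type*} {m₁ m₂ m0 : MeasurableSpace Ω} (hle₁ : m₁ ≤ m0)
    (hle₂ : m₂ ≤ m0) {μ : Measure Ω} [IsProbabilityMeasure μ]
    {X : Ω → ℝ} (hXm : Measurable X) (hX : Integrable X μ)
    (hindep : Indep (m₁ ⊔ MeasurableSpace.comap X inferInstance) m₂ μ) :
    μ[X | m₁ ⊔ m₂] =ᵐ[μ] μ[X | m₁] := by
  have hm : m₁ ⊔ m₂ ≤ m0 := sup_le hle₁ hle₂
  set g := μ[X | m₁] with hg
  have hgm₁ : StronglyMeasurable[m₁] g := stronglyMeasurable_condExp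
  have hgint : Integrable g μ := integrable_condExp
  have key : ∀ s : Set Ω, MeasurableSet[m₁ ⊔ m₂] s →
      ∫ x in s, g x ∂μ = ∫ x in s, X x ∂μ := by
    have h_basic : ∀ t ∈ {s : Set Ω | ∃ A B, MeasurableSet[m₁] A ∧ MeasurableSet[m₂] B ∧
        s = A ∩ B}, ∫ x in t, g x ∂μ = ∫ x in t, X x ∂μ := by
      rintro t ⟨A, B, hA, hB, rfl⟩
      have hA0 : MeasurableSet[m0] A := hle₁ _ hA
      have hB0 : MeasurableSet[m0] B := hle₂ _ hB
      set v : Ω → ℝ := B.indicator (fun _ => (1 : ℝ)) with hv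
      have hv_int : Integrable v μ := (integrable_const (1 : ℝ)).indicator hB0
      have hvmeas : Measurable[m₂] v := measurable_indicator_one' hB
      have prod_eq : ∀ h : Ω → ℝ, (A.indicator h) * v = (A ∩ B).indicator h := by
        intro h
        funext ω
        by_cases hωA : ω ∈ A <;> by_cases hωB : ω ∈ B <;>
          simp [hv, Pi.mul_apply, Set.indicator_of_mem, Set.indicator_of_notMem, hωA, hωB,
            Set.mem_inter_iff]
      have hcalc : ∀ h : Ω → ℝ, Integrable h μ →
          Measurable[m₁ ⊔ MeasurableSpace.comap X inferInstance] h →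
          ∫ x in A ∩ B, h x ∂μ = (∫ x in A, h x ∂μ) * ∫ x, v x ∂μ := by
        intro h hint hmeas'
        have hAm : MeasurableSet[m₁ ⊔ MeasurableSpace.comap X inferInstance] A :=
          measSet_mono le_sup_left hA
        have hu_meas : Measurable[m₁ ⊔ MeasurableSpace.comap X inferInstance]
            (A.indicator h) := measurable_indicator_fun' hmeas' hAm
        have hiuv : IndepFun (A.indicator h) v μ :=
          (IndepFun_iff_Indep _ _ μ).2 (indep_of_indep_of_le_right
            (indep_of_indep_of_le_left hindep hu_meas.comap_le) hvmeas.comap_le)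
        have hu_int : Integrable (A.indicator h) μ := hint.indicator hA0
        calc ∫ x in A ∩ B, h x ∂μ = ∫ x, (A ∩ B).indicator h x ∂μ :=
              (integral_indicator (hA0.inter hB0)).symm
          _ = ∫ x, ((A.indicator h) * v) x ∂μ := by rw [prod_eq]
          _ = (∫ x, A.indicator h x ∂μ) * ∫ x, v x ∂μ :=
              IndepFun.integral_mul_eq_mul_integral hiuv hu_int.aestronglyMeasurable hv_int.aestronglyMeasurable
          _ = (∫ x in A, h x ∂μ) * ∫ x, v x ∂μ := by rw [integral_indicator hA0]
      have hXmeas' : Measurable[m₁ ⊔ MeasurableSpace.comap X inferInstance] X :=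
        Measurable.of_comap_le le_sup_right
      have hgmeas' : Measurable[m₁ ⊔ MeasurableSpace.comap X inferInstance] g :=
        (hgm₁.measurable).mono le_sup_left le_rfl
      rw [hcalc X hX hXmeas', hcalc g hgint hgmeas', setIntegral_condExp hle₁ hX hA]
    intro s hs
    refine MeasurableSpace.induction_on_inter (m := m₁ ⊔ m₂)
      (C := fun s _ => ∫ x in s, g x ∂μ = ∫ x in s, X x ∂μ)
      (sup_eq_generateFrom_inter m₁ m₂) (isPiSystem_inter_sets m₁ m₂) (by simp) h_basic
      ?_ ?_ s hs
    · intro t htm iht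
      have htm0 : MeasurableSet[m0] t := hm _ htm
      have h1 := integral_add_compl htm0 hgint
      have h2 := integral_add_compl htm0 hX
      have h3 : ∫ x, g x ∂μ = ∫ x, X x ∂μ := integral_condExp hle₁ (μ := μ) (f := X)
      linarith
    · intro u hdisj hum ihu
      have hum0 : ∀ n, MeasurableSet[m0] (u n) := fun n => hm _ (hum n)
      rw [integral_iUnion hum0 hdisj hgint.integrableOn,
        integral_iUnion hum0 hdisj hX.integrableOn]
      exact tsum_congr ihu
  refine (ae_eq_condExp_of_forall_setIntegral_eq hm hX
    (fun s _ _ => hgint.integrableOn) (fun s hs _ => key s hs)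
    (StronglyMeasurable.aestronglyMeasurable (hgm₁.mono le_sup_left))).symm

lemma comap_single_le_row {Ω : Type*} (C : ℕ → Ω → ℝ) (l : ℕ) :
    MeasurableSpace.comap (C l) inferInstance ≤
      MeasurableSpace.comap (fun ω j => C j ω) MeasurableSpace.pi := by
  have h1 : C l = (fun p : ℕ → ℝ => p l) ∘ (fun ω j => C j ω) := rfl
  rw [h1, ← MeasurableSpace.comap_comp]
  exact MeasurableSpace.comap_mono (measurable_pi_apply l).comap_le

lemma stepA {Ω : Type*} {m0 : MeasurableSpace Ω} {μ : Measure Ω} [IsProbabilityMeasure μ]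
    (I J : ℕ) (C : ℕ → ℕ → Ω → ℝ) (f : ℕ → ℝ)
    (hmeas : ∀ k j, Measurable (C k j)) (hint : ∀ k j, Integrable (C k j) μ)
    (hindep : ProbabilityTheory.iIndepFun (m := fun _ => MeasurableSpace.pi)
      (fun k ω j => C k j ω) μ)
    (hCL : ∀ k j, j < J → μ[C k (j + 1) | hist (C k) j] =ᵐ[μ] fun ω => f j * C k j ω)
    (k j : ℕ) (hk1 : 1 ≤ k) (hk2 : k ≤ I) (hjJ : j < J) :
    μ[C k (j+1) | histAll I C j] =ᵐ[μ] fun ω => f j * C k j ω := by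
  classical
  have hrowmeas : ∀ k', Measurable (fun ω l => C k' l ω) :=
    fun k' => measurable_pi_lambda _ fun l => hmeas k' l
  have hrowle : ∀ k', hist (C k') j ≤
      MeasurableSpace.comap (fun ω l => C k' l ω) MeasurableSpace.pi :=
    fun k' => iSup₂_le fun l _ => comap_single_le_row (fun l => C k' l) l
  have histle : ∀ k', hist (C k') j ≤ m0 :=
    fun k' => (hrowle k').trans (hrowmeas k').comap_le
  set m₂ : MeasurableSpace Ω := ⨆ k' ∈ (Set.Icc 1 I \ {k}), hist (C k') j with hm₂
  have hm₂le : m₂ ≤ m0 := iSup₂_le fun k' _ => histle k'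
  have hsplit : histAll I C j = hist (C k) j ⊔ m₂ := by
    have hins : Set.Icc 1 I = insert k (Set.Icc 1 I \ {k}) := by
      rw [Set.insert_diff_singleton, Set.insert_eq_self.mpr (Set.mem_Icc.mpr ⟨hk1, hk2⟩)]
    have h0 : histAll I C j = ⨆ k' ∈ Set.Icc 1 I, hist (C k') j := rfl
    rw [h0, hins, _root_.iSup_insert]
  rw [hsplit]
  have hii : ProbabilityTheory.iIndep
      (fun k' => MeasurableSpace.comap (fun ω l => C k' l ω) MeasurableSpace.pi) μ :=
    (ProbabilityTheory.iIndepFun_iff_iIndep _ _ _).mp hindep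
  have hbase := ProbabilityTheory.indep_iSup_of_disjoint
    (fun k' => (hrowmeas k').comap_le) hii (S := {k}) (T := {k}ᶜ) disjoint_compl_right
  have hIndep2 : ProbabilityTheory.Indep
      (hist (C k) j ⊔ MeasurableSpace.comap (C k (j+1)) inferInstance) m₂ μ := by
    refine ProbabilityTheory.indep_of_indep_of_le_right
      (ProbabilityTheory.indep_of_indep_of_le_left hbase ?_) ?_
    · refine sup_le ?_ ?_
      · exact (hrowle k).trans (le_biSup (fun i => MeasurableSpace.comap (fun ω l => C i l ω) MeasurableSpace.pi) (Set.mem_singleton k))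
      · exact (comap_single_le_row (fun l => C k l) (j+1)).trans (le_biSup (fun i => MeasurableSpace.comap (fun ω l => C i l ω) MeasurableSpace.pi) (Set.mem_singleton k))
    · exact iSup₂_le fun k' hk' => (hrowle k').trans (le_biSup (fun i => MeasurableSpace.comap (fun ω l => C i l ω) MeasurableSpace.pi) (Set.mem_compl hk'.2))
  exact (condexp_sup_indep (histle k) hm₂le (hmeas k (j+1)) (hint k (j+1)) hIndep2).trans
    (hCL k j hjJ)

lemma measurable_mul'' {Ω : Type*} {m : MeasurableSpace Ω} {f g : Ω → ℝ}
    (hf : Measurable[m] f) (hg : Measurable[m] g) : Measurable[m] (fun ω => f ω * g ω) :=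
  hf.mul hg

lemma measurable_const_mul'' {Ω : Type*} {m : MeasurableSpace Ω} (c : ℝ) {f : Ω → ℝ}
    (hf : Measurable[m] f) : Measurable[m] (fun ω => c * f ω) :=
  measurable_const.mul hf

lemma measurable_div'' {Ω : Type*} {m : MeasurableSpace Ω} {f g : Ω → ℝ}
    (hf : Measurable[m] f) (hg : Measurable[m] g) : Measurable[m] (fun ω => f ω / g ω) :=
  hf.div hg

lemma measurable_prod'' {Ω : Type*} {m : MeasurableSpace Ω} {s : Finset ℕ} {f : ℕ → Ω → ℝ}
    (hf : ∀ l ∈ s, Measurable[m] (f l)) : Measurable[m] (fun ω => ∏ l ∈ s, f l ω) :=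
  Finset.measurable_prod s hf

lemma measurable_sum'' {Ω : Type*} {m : MeasurableSpace Ω} {s : Finset ℕ} {f : ℕ → Ω → ℝ}
    (hf : ∀ l ∈ s, Measurable[m] (f l)) : Measurable[m] (fun ω => ∑ l ∈ s, f l ω) :=
  Finset.measurable_sum s hf

lemma stronglyMeasurable_of_measurable'' {Ω : Type*} {m : MeasurableSpace Ω} {f : Ω → ℝ}
    (hf : Measurable[m] f) : StronglyMeasurable[m] f :=
  hf.stronglyMeasurable

end Aux

/-- Conditional unbiasedness of the chain-ladder predictor:
`E[Ĉ_{i,J} | B_{I-i}] = E[C_{i,J} | B_{I-i}]` a.s. for accident periods `i > I - J`. -/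
theorem stmt_8 {Ω : Type*} {m0 : MeasurableSpace Ω} (μ : Measure Ω) [IsProbabilityMeasure μ]
    (I J i : ℕ) (hJ : 1 ≤ J) (hIJ : J < I) (hi1 : I - J < i) (hi2 : i ≤ I)
    (C : ℕ → ℕ → Ω → ℝ) (f : ℕ → ℝ)
    (hmeas : ∀ k j, Measurable (C k j))
    (hint : ∀ k j, Integrable (C k j) μ)
    (hpos : ∀ k j, ∀ᵐ ω ∂μ, 0 < C k j ω)
    (hf : ∀ j, j < J → 0 < f j)
    (hindep : ProbabilityTheory.iIndepFun (m := fun _ => MeasurableSpace.pi)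
      (fun k ω j => C k j ω) μ)
    (hCL : ∀ k j, j < J → μ[C k (j + 1) | hist (C k) j] =ᵐ[μ] fun ω => f j * C k j ω)
    (fhat : ℕ → Ω → ℝ)
    (hfhat : ∀ j, fhat j = fun ω =>
      (∑ k ∈ Icc 1 (I - j - 1), C k (j + 1) ω) / (∑ k ∈ Icc 1 (I - j - 1), C k j ω))
    (Chat : Ω → ℝ)
    (hChat : Chat = fun ω => C i (I - i) ω * ∏ l ∈ Ico (I - i) J, fhat l ω)
    (hChatInt : Integrable Chat μ) :
    μ[Chat | histAll I C (I - i)] =ᵐ[μ] μ[C i J | histAll I C (I - i)] := by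
  classical
  set j0 := I - i with hj0def
  have h1i : 1 ≤ i := by omega
  have hj0J : j0 < J := by omega
  have hBle : ∀ j, histAll I C j ≤ m0 := fun j =>
    iSup₂_le fun k _ => iSup₂_le fun l _ => (hmeas k l).comap_le
  have hBmeasC : ∀ j k l, 1 ≤ k → k ≤ I → l ≤ j → Measurable[histAll I C j] (C k l) := by
    intro j k l hk1 hk2 hl
    refine Measurable.of_comap_le (le_trans ?_ (le_biSup
      (fun k => ⨆ l ∈ Set.Iic j, MeasurableSpace.comap (C k l) inferInstance)
      (Set.mem_Icc.mpr ⟨hk1, hk2⟩)))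
    exact le_biSup (fun l => MeasurableSpace.comap (C k l) inferInstance) (Set.mem_Iic.mpr hl)
  have hBmono : ∀ {j j' : ℕ}, j ≤ j' → histAll I C j ≤ histAll I C j' := by
    intro j j' hjj'
    refine iSup₂_le fun k hk => iSup₂_le fun l hl => ?_
    have hk' := Set.mem_Icc.mp hk
    exact (hBmeasC j' k l hk'.1 hk'.2 (le_trans (Set.mem_Iic.mp hl) hjj')).comap_le
  have stepA' := stepA I J C f hmeas hint hindep hCL
  -- Conditional expectation of the column sums
  have hSsum : ∀ j, j < J →
      μ[(fun ω => ∑ k ∈ Icc 1 (I - j - 1), C k (j + 1) ω) | histAll I C j] =ᵐ[μ]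
        fun ω => f j * ∑ k ∈ Icc 1 (I - j - 1), C k j ω := by
    intro j hjJ
    have h1 : (fun ω => ∑ k ∈ Icc 1 (I - j - 1), C k (j + 1) ω)
        = ∑ k ∈ Icc 1 (I - j - 1), C k (j + 1) :=
      funext fun ω => (Finset.sum_apply ω _ _).symm
    rw [h1]
    refine (condExp_finset_sum (fun k _ => hint k (j + 1)) (histAll I C j)).trans ?_
    have hae : ∀ᵐ ω ∂μ, ∀ k, k ∈ Icc 1 (I - j - 1) →
        (μ[C k (j + 1) | histAll I C j]) ω = f j * C k j ω := by
      rw [MeasureTheory.ae_all_iff]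
      intro k
      by_cases hk : k ∈ Icc 1 (I - j - 1)
      · have hk' := Finset.mem_Icc.mp hk
        filter_upwards [stepA' k j hk'.1 (by omega) hjJ] with ω hω _
        exact hω
      · exact Filter.Eventually.of_forall fun ω hcon => absurd hcon hk
    filter_upwards [hae] with ω hω
    rw [Finset.sum_apply, Finset.mul_sum]
    exact Finset.sum_congr rfl fun k hk => hω k hk
  -- Positivity of the denominators
  have hDpos : ∀ j, j < J → ∀ᵐ ω ∂μ, 0 < ∑ k ∈ Icc 1 (I - j - 1), C k j ω := by
    intro j hjJ
    have hall : ∀ᵐ ω ∂μ, ∀ k, 0 < C k j ω := MeasureTheory.ae_all_iff.2 fun k => hpos k j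
    filter_upwards [hall] with ω hω
    refine Finset.sum_pos (fun k _ => hω k) ?_
    rw [Finset.nonempty_Icc]
    omega
  -- Measurability of partial chain-ladder products
  have hAmeas : ∀ j, j0 ≤ j → j ≤ J →
      Measurable[histAll I C j] (fun ω => C i j0 ω * ∏ l ∈ Ico j0 j, fhat l ω) := by
    intro j hj0j hjJ'
    refine measurable_mul'' (hBmeasC j i j0 h1i hi2 hj0j) (measurable_prod'' fun l hl => ?_)
    have hl' := Finset.mem_Ico.mp hl
    rw [hfhat l]
    refine measurable_div'' (measurable_sum'' fun k hk => ?_) (measurable_sum'' fun k hk => ?_)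
    · have hk' := Finset.mem_Icc.mp hk
      exact hBmeasC j k (l + 1) hk'.1 (by omega) (by omega)
    · have hk' := Finset.mem_Icc.mp hk
      exact hBmeasC j k l hk'.1 (by omega) (by omega)
  -- The one-step conditional expectation of the partial products
  have hstep : ∀ j, j0 ≤ j → j < J → ∀ c : ℝ,
      Integrable (fun ω => c * (C i j0 ω * ∏ l ∈ Ico j0 (j + 1), fhat l ω)) μ →
      μ[(fun ω => c * (C i j0 ω * ∏ l ∈ Ico j0 (j + 1), fhat l ω)) | histAll I C j]
        =ᵐ[μ] fun ω => (c * f j) * (C i j0 ω * ∏ l ∈ Ico j0 j, fhat l ω) := by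
    intro j hj0j hjJ c hcint
    have heq : (fun ω => c * (C i j0 ω * ∏ l ∈ Ico j0 (j + 1), fhat l ω))
        = (fun ω => c * (C i j0 ω * ∏ l ∈ Ico j0 j, fhat l ω)
              / (∑ k ∈ Icc 1 (I - j - 1), C k j ω))
          * (fun ω => ∑ k ∈ Icc 1 (I - j - 1), C k (j + 1) ω) := by
      funext ω
      simp only [Pi.mul_apply]
      rw [Finset.prod_Ico_succ_top hj0j, hfhat j]
      ring
    rw [heq] at hcint ⊢
    have hmeasF : Measurable[histAll I C j] (fun ω =>
        c * (C i j0 ω * ∏ l ∈ Ico j0 j, fhat l ω) / (∑ k ∈ Icc 1 (I - j - 1), C k j ω)) :=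
      measurable_div'' (measurable_const_mul'' c (hAmeas j hj0j (le_of_lt hjJ)))
        (measurable_sum'' fun k hk =>
          hBmeasC j k j (Finset.mem_Icc.mp hk).1 (by
            have := (Finset.mem_Icc.mp hk).2; omega) le_rfl)
    refine (condExp_mul_of_stronglyMeasurable_left (stronglyMeasurable_of_measurable'' hmeasF) hcint
      (integrable_finset_sum _ fun k _ => hint k (j + 1))).trans ?_
    filter_upwards [hSsum j hjJ, hDpos j hjJ] with ω h1 h2
    simp only [Pi.mul_apply]
    rw [h1]
    have hne : (∑ k ∈ Icc 1 (I - j - 1), C k j ω) ≠ 0 := ne_of_gt h2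
    field_simp
  -- Downward induction for the LHS
  have hLHS : ∀ d j, j0 ≤ j → j + d = J →
      μ[Chat | histAll I C j] =ᵐ[μ]
        fun ω => (∏ l ∈ Ico j J, f l) * (C i j0 ω * ∏ l ∈ Ico j0 j, fhat l ω) := by
    intro d
    induction d with
    | zero =>
      intro j hj0j hjd
      obtain rfl : J = j := by omega
      have hmeasChat : StronglyMeasurable[histAll I C J] Chat := by
        rw [hChat]
        exact stronglyMeasurable_of_measurable'' (hAmeas J (le_of_lt hj0J) le_rfl)
      rw [condExp_of_stronglyMeasurable (hBle J) hmeasChat hChatInt, hChat]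
      filter_upwards with ω
      simp
    | succ d ih =>
      intro j hj0j hjd
      have h1 : μ[Chat | histAll I C j]
          =ᵐ[μ] μ[μ[Chat | histAll I C (j + 1)] | histAll I C j] :=
        (condExp_condExp_of_le (hBmono (Nat.le_succ j)) (hBle (j + 1))).symm
      have h2 := ih (j + 1) (by omega) (by omega)
      have h3 := condExp_congr_ae (m := histAll I C j) h2
      have hint' : Integrable (fun ω => (∏ l ∈ Ico (j + 1) J, f l)
          * (C i j0 ω * ∏ l ∈ Ico j0 (j + 1), fhat l ω)) μ :=
        integrable_condExp.congr h2
      have h4 := hstep j hj0j (by omega) (∏ l ∈ Ico (j + 1) J, f l) hint'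
      refine h1.trans (h3.trans (h4.trans ?_))
      filter_upwards with ω
      rw [Finset.prod_eq_prod_Ico_succ_bot (by omega : j < J) f]
      ring
  -- Downward induction for the RHS
  have hRHS : ∀ d j, j0 ≤ j → j + d = J →
      μ[C i J | histAll I C j] =ᵐ[μ]
        fun ω => (∏ l ∈ Ico j J, f l) * C i j ω := by
    intro d
    induction d with
    | zero =>
      intro j hj0j hjd
      obtain rfl : J = j := by omega
      rw [condExp_of_stronglyMeasurable (hBle J)
        (stronglyMeasurable_of_measurable'' (hBmeasC J i J h1i hi2 le_rfl)) (hint i J)]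
      filter_upwards with ω
      simp
    | succ d ih =>
      intro j hj0j hjd
      have h1 : μ[C i J | histAll I C j]
          =ᵐ[μ] μ[μ[C i J | histAll I C (j + 1)] | histAll I C j] :=
        (condExp_condExp_of_le (hBmono (Nat.le_succ j)) (hBle (j + 1))).symm
      have h2 := ih (j + 1) (by omega) (by omega)
      have h3 := condExp_congr_ae (m := histAll I C j) h2
      have h4 : (fun ω => (∏ l ∈ Ico (j + 1) J, f l) * C i (j + 1) ω)
          = (∏ l ∈ Ico (j + 1) J, f l) • C i (j + 1) := by
        funext ω
        simp [smul_eq_mul]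
      have h5 := condExp_smul (μ := μ) (m := histAll I C j)
        (∏ l ∈ Ico (j + 1) J, f l) (C i (j + 1))
      have h6 := stepA' i j h1i hi2 (by omega)
      refine h1.trans (h3.trans ?_)
      rw [h4]
      refine h5.trans ?_
      filter_upwards [h6] with ω hω
      simp only [Pi.smul_apply, smul_eq_mul]
      rw [hω, Finset.prod_eq_prod_Ico_succ_bot (by omega : j < J) f]
      ring
  have hL := hLHS (J - j0) j0 le_rfl (by omega)
  have hR := hRHS (J - j0) j0 le_rfl (by omega)
  refine hL.trans (Filter.EventuallyEq.trans ?_ hR.symm)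
  filter_upwards with ω
  simp
end

section
/- Multi-step conditional variance formula: in Mack's chain-ladder model, for $j < J$, $\mathrm{Var}(C_{i,J} \mid \mathcal{F}_{i,j}) = C_{i,j} \sum_{k=j}^{J-1} \sigma_k^2 \left(\prod_{l=j}^{k-1} f_l\right)\left(\prod_{l=k+1}^{J-1} f_l^2\right)$ almost surely. -/
open MeasureTheory Finset

/-- Multi-step conditional variance formula in Mack's chain-ladder model:
`Var(C_J | ℱ_j) = C_j ∑_{k=j}^{J-1} σ_k² (∏_{l=j}^{k-1} f_l)(∏_{l=k+1}^{J-1} f_l²)` a.s. -/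
theorem stmt_10 {Ω : Type*} {m0 : MeasurableSpace Ω} (μ : Measure Ω) [IsProbabilityMeasure μ]
    (J : ℕ) (C : ℕ → Ω → ℝ) (f σ2 : ℕ → ℝ)
    (hmeas : ∀ j, Measurable (C j))
    (hL2 : ∀ j, MemLp (C j) 2 μ)
    (hpos : ∀ j, ∀ᵐ ω ∂μ, 0 < C j ω)
    (hf : ∀ j, j < J → 0 < f j) (hσ : ∀ j, j < J → 0 < σ2 j)
    (hCL : ∀ j, j < J → μ[C (j + 1) | hist C j] =ᵐ[μ] fun ω => f j * C j ω)
    (hVar : ∀ j, j < J →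
      (fun ω => (μ[fun ω => (C (j + 1) ω) ^ 2 | hist C j]) ω
          - ((μ[C (j + 1) | hist C j]) ω) ^ 2)
        =ᵐ[μ] fun ω => σ2 j * C j ω)
    (j : ℕ) (hj : j < J) :
    (fun ω => (μ[fun ω => (C J ω) ^ 2 | hist C j]) ω - ((μ[C J | hist C j]) ω) ^ 2)
      =ᵐ[μ] fun ω => C j ω *
        ∑ k ∈ Ico j J, σ2 k * (∏ l ∈ Ico j k, f l) * (∏ l ∈ Ico (k + 1) J, (f l) ^ 2) := by
  classical
  -- basic measurability facts
  have hle : ∀ k, hist C k ≤ m0 := fun k =>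
    iSup₂_le fun i _ => measurable_iff_comap_le.mp (hmeas i)
  have hmono : ∀ {a b : ℕ}, a ≤ b → hist C a ≤ hist C b := by
    intro a b hab
    exact biSup_mono fun k hk => le_trans hk hab
  have hmeasC : ∀ k, Measurable[hist C k] (C k) := fun k =>
    measurable_iff_comap_le.mpr
      (le_biSup (fun i => MeasurableSpace.comap (C i) inferInstance)
        (Set.mem_Iic.mpr le_rfl))
  have hInt : ∀ k, Integrable (C k) μ := fun k => (hL2 k).integrable one_le_two
  have hIntSq : ∀ k, Integrable (fun ω => C k ω ^ 2) μ := fun k => (hL2 k).integrable_sq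
  -- the key backward induction
  have key : ∀ n j, j + n = J →
      (μ[C J | hist C j] =ᵐ[μ] fun ω => (∏ l ∈ Ico j J, f l) * C j ω) ∧
      (μ[(fun ω => C J ω ^ 2) | hist C j] =ᵐ[μ]
        fun ω => (∑ k ∈ Ico j J, σ2 k * (∏ l ∈ Ico j k, f l) *
            (∏ l ∈ Ico (k + 1) J, (f l) ^ 2)) * C j ω
          + ((∏ l ∈ Ico j J, f l) ^ 2) * (C j ω) ^ 2) := by
    intro n
    induction n with
    | zero =>
      intro j hjJ
      simp only [Nat.add_zero] at hjJ
      subst hjJ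
      constructor
      · have h1 : μ[C j | hist C j] = C j :=
          condExp_of_stronglyMeasurable (hle j) (hmeasC j).stronglyMeasurable (hInt j)
        rw [h1]
        filter_upwards with ω
        simp [Ico_self]
      · have h2 : μ[(fun ω => C j ω ^ 2) | hist C j] = fun ω => C j ω ^ 2 :=
          condExp_of_stronglyMeasurable (hle j)
            ((hmeasC j).pow_const 2).stronglyMeasurable (hIntSq j)
        rw [h2]
        filter_upwards with ω
        simp [Ico_self]
    | succ n ih =>
      intro j hjJ
      have hjJ' : (j + 1) + n = J := by omega
      have hjlt : j < J := by omega
      obtain ⟨ihMean, ihSq⟩ := ih (j + 1) hjJ'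
      set P1 : ℝ := ∏ l ∈ Ico (j + 1) J, f l with hP1
      set S1 : ℝ := ∑ k ∈ Ico (j + 1) J, σ2 k * (∏ l ∈ Ico (j + 1) k, f l) *
          (∏ l ∈ Ico (k + 1) J, (f l) ^ 2) with hS1
      have hmle : hist C j ≤ hist C (j + 1) := hmono (Nat.le_succ j)
      -- second-moment one-step formula
      have hSqStep : μ[(fun ω => C (j + 1) ω ^ 2) | hist C j]
          =ᵐ[μ] fun ω => σ2 j * C j ω + (f j * C j ω) ^ 2 := by
        filter_upwards [hVar j hjlt, hCL j hjlt] with ω h1 h2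
        have : (μ[fun ω => (C (j + 1) ω) ^ 2 | hist C j]) ω
            - ((μ[C (j + 1) | hist C j]) ω) ^ 2 = σ2 j * C j ω := h1
        rw [h2] at this
        linarith
      constructor
      · -- mean formula
        have t1 : μ[C J | hist C j] =ᵐ[μ] μ[μ[C J | hist C (j + 1)] | hist C j] :=
          (condExp_condExp_of_le hmle (hle (j + 1))).symm
        have t2 : μ[μ[C J | hist C (j + 1)] | hist C j]
            =ᵐ[μ] μ[(fun ω => P1 * C (j + 1) ω) | hist C j] :=
          condExp_congr_ae ihMean
        have t3 : μ[(fun ω => P1 * C (j + 1) ω) | hist C j]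
            =ᵐ[μ] fun ω => P1 * (μ[C (j + 1) | hist C j]) ω := by
          simpa [Pi.smul_def, smul_eq_mul] using condExp_smul (μ := μ) (m := hist C j) P1 (C (j + 1))
        refine ((t1.trans t2).trans t3).trans ?_
        filter_upwards [hCL j hjlt] with ω h2
        rw [h2, prod_eq_prod_Ico_succ_bot hjlt]
        ring
      · -- second moment formula
        have t1 : μ[(fun ω => C J ω ^ 2) | hist C j]
            =ᵐ[μ] μ[μ[(fun ω => C J ω ^ 2) | hist C (j + 1)] | hist C j] :=
          (condExp_condExp_of_le hmle (hle (j + 1))).symm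
        have t2 : μ[μ[(fun ω => C J ω ^ 2) | hist C (j + 1)] | hist C j]
            =ᵐ[μ] μ[(fun ω => S1 * C (j + 1) ω + P1 ^ 2 * C (j + 1) ω ^ 2) | hist C j] :=
          condExp_congr_ae ihSq
        have t3 : μ[(fun ω => S1 * C (j + 1) ω + P1 ^ 2 * C (j + 1) ω ^ 2) | hist C j]
            =ᵐ[μ] fun ω => S1 * (μ[C (j + 1) | hist C j]) ω
              + P1 ^ 2 * (μ[(fun ω => C (j + 1) ω ^ 2) | hist C j]) ω := by
          have hadd := condExp_add (μ := μ) (m := hist C j)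
            ((hInt (j + 1)).const_mul S1) ((hIntSq (j + 1)).const_mul (P1 ^ 2))
          have ha : μ[(fun ω => S1 * C (j + 1) ω) | hist C j]
              =ᵐ[μ] fun ω => S1 * (μ[C (j + 1) | hist C j]) ω := by
            simpa [Pi.smul_def, smul_eq_mul] using condExp_smul (μ := μ) (m := hist C j) S1 (C (j + 1))
          have hb : μ[(fun ω => P1 ^ 2 * C (j + 1) ω ^ 2) | hist C j]
              =ᵐ[μ] fun ω => P1 ^ 2 * (μ[(fun ω => C (j + 1) ω ^ 2) | hist C j]) ω := by
            simpa [Pi.smul_def, smul_eq_mul] using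
              condExp_smul (μ := μ) (m := hist C j) (P1 ^ 2) (fun ω => C (j + 1) ω ^ 2)
          refine hadd.trans ?_
          filter_upwards [ha, hb] with ω h1 h2
          simp only [Pi.add_apply]
          rw [h1, h2]
        refine ((t1.trans t2).trans t3).trans ?_
        -- algebraic recursion for the sum and product
        have hSrec : (∑ k ∈ Ico j J, σ2 k * (∏ l ∈ Ico j k, f l) *
            (∏ l ∈ Ico (k + 1) J, (f l) ^ 2))
            = σ2 j * P1 ^ 2 + f j * S1 := by
          have hpp : (∏ l ∈ Ico (j + 1) J, (f l) ^ 2) = P1 ^ 2 := by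
            rw [hP1, Finset.prod_pow]
          rw [Finset.sum_eq_sum_Ico_succ_bot hjlt, hS1, Finset.mul_sum]
          rw [hpp]
          congr 1
          · simp [Ico_self]
          · refine Finset.sum_congr rfl fun k hk => ?_
            have hjk : j < k := by
              have := (Finset.mem_Ico.mp hk).1; omega
            rw [prod_eq_prod_Ico_succ_bot hjk]
            ring
        have hPrec : (∏ l ∈ Ico j J, f l) = f j * P1 := prod_eq_prod_Ico_succ_bot hjlt f
        filter_upwards [hCL j hjlt, hSqStep] with ω h1 h2
        rw [h1, h2, hSrec, hPrec]
        ring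
  obtain ⟨hMean, hSq⟩ := key (J - j) j (by omega)
  filter_upwards [hMean, hSq] with ω h1 h2
  rw [h1, h2]
  ring
end
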